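/- arXiv:2310.00580 — 2 statements merged into one kernel-verified Lean document; each statement's English description precedes it below -/
import Mathlib

section
/- Let m ≥ 2^{n+1} + 1 and let G be the generalized lollipop graph consisting of a path r, v_n, …, v_1 of length n together with m internally disjoint paths of length 2 from v_1 to a common vertex u_0. Define w(r) = 0, w(v_j) = 2^j for 1 ≤ j ≤ n, and w(u) = 1 for u_0 and each of the m middle vertices. Then every configuration p on G with w(p) > w(1_G) = 2^{n+1} − 2 + (m + 1) is r-solvable, i.e., w is valid. -/
open SimpleGraph Finset

def PebMove {V : Type*} [DecidableEq V] (G : SimpleGraph V) (p q : V → ℕ) : Prop :=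
  ∃ u v, G.Adj u v ∧ 2 ≤ p u ∧
    q = fun x => if x = u then p u - 2 else if x = v then p v + 1 else p x

def Solvable {V : Type*} [DecidableEq V] (G : SimpleGraph V) (r : V) (p : V → ℕ) : Prop :=
  ∃ q, Relation.ReflTransGen (PebMove G) p q ∧ 1 ≤ q r

noncomputable def confWeight {V : Type*} [Fintype V] (w : V → ℝ) (p : V → ℕ) : ℝ :=
  ∑ v, (p v : ℝ) * w v

def ValidWeight {V : Type*} [Fintype V] [DecidableEq V] (G : SimpleGraph V) (r : V)
    (w : V → ℝ) : Prop :=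
  w r = 0 ∧ (∀ v, v ≠ r → 0 < w v) ∧
    ∀ p : V → ℕ, ¬ Solvable G r p → confWeight w p ≤ confWeight w (fun _ => 1)

noncomputable def rootedPebblingNumber {V : Type*} [Fintype V] [DecidableEq V]
    (G : SimpleGraph V) (r : V) : ℕ :=
  sInf {N | ∀ p : V → ℕ, N ≤ ∑ v, p v → Solvable G r p}

noncomputable def pebblingNumber {V : Type*} [Fintype V] [DecidableEq V]
    (G : SimpleGraph V) : ℕ :=
  sInf {N | ∀ (r : V) (p : V → ℕ), N ≤ ∑ v, p v → Solvable G r p}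

def cubeGraph (n : ℕ) : SimpleGraph (Fin n → Bool) :=
  SimpleGraph.fromRel (fun x y => hammingDist x y = 1)

def addPendant {V : Type*} (G : SimpleGraph V) (a : V) : SimpleGraph (Option V) :=
  SimpleGraph.fromRel (fun x y =>
    match x, y with
    | some u, some v => G.Adj u v
    | none, some u => u = a
    | _, _ => False)

def lollipop (n m : ℕ) : SimpleGraph (Fin (n + 1) ⊕ Fin (m + 1)) :=
  SimpleGraph.fromRel (fun x y =>
    match x, y with
    | Sum.inl i, Sum.inl j => (i : ℕ) + 1 = (j : ℕ)
    | Sum.inl i, Sum.inr j => i = 0 ∧ j ≠ 0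
    | Sum.inr i, Sum.inr j => i = 0 ∧ j ≠ 0
    | _, _ => False)

/-- Weight function on the lollipop: `Sum.inl i` is the path vertex `v_{i+1}`
(`Sum.inl n` being the root `r`), and `Sum.inr j` are the vertices `u_j`. -/
noncomputable def wL (n : ℕ) {m : ℕ} : (Fin (n + 1) ⊕ Fin (m + 1)) → ℝ
  | Sum.inl i => if (i : ℕ) = n then 0 else 2 ^ ((i : ℕ) + 1)
  | Sum.inr _ => 1

lemma rtg_solvable {V : Type*} [DecidableEq V] {G : SimpleGraph V} {r : V} {p q : V → ℕ}
    (h : Relation.ReflTransGen (PebMove G) p q) (hq : Solvable G r q) : Solvable G r p := by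
  obtain ⟨q', h', hr⟩ := hq
  exact ⟨q', h.trans h', hr⟩

lemma moveMany {V : Type*} [DecidableEq V] {G : SimpleGraph V} {u v : V} (h : G.Adj u v)
    (c : ℕ) : ∀ (p : V → ℕ), 2 * c ≤ p u →
    Relation.ReflTransGen (PebMove G) p
      (fun x => if x = u then p u - 2 * c else if x = v then p v + c else p x) := by
  have hne : u ≠ v := h.ne
  induction c with
  | zero =>
    intro p _
    have he : (fun x => if x = u then p u - 2 * 0 else if x = v then p v + 0 else p x) = p := by
      funext x
      by_cases h1 : x = u
      · simp [h1]
      · by_cases h2 : x = v <;> simp [h1, h2, Ne.symm hne]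
    rw [he]
  | succ c ih =>
    intro p hc
    set p1 : V → ℕ := fun x => if x = u then p u - 2 else if x = v then p v + 1 else p x with hp1
    have hstep : PebMove G p p1 := ⟨u, v, h, by omega, rfl⟩
    have hp1u : p1 u = p u - 2 := by simp [hp1]
    have hp1v : p1 v = p v + 1 := by simp [hp1, hne.symm, Ne.symm hne]
    have ih' := ih p1 (by omega)
    have he : (fun x => if x = u then p1 u - 2 * c else if x = v then p1 v + c else p x) =
        (fun x => if x = u then p u - 2 * (c + 1) else if x = v then p v + (c + 1) else p x) := by
      funext x
      by_cases h1 : x = u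
      · simp [h1, hp1u]; omega
      · by_cases h2 : x = v
        · simp [h1, h2, hp1v, Ne.symm hne]; omega
        · simp [h1, h2]
    have he2 : (fun x => if x = u then p1 u - 2 * c else if x = v then p1 v + c else p1 x) =
        (fun x => if x = u then p1 u - 2 * c else if x = v then p1 v + c else p x) := by
      funext x
      by_cases h1 : x = u
      · simp [h1]
      · by_cases h2 : x = v <;> simp [hp1, h1, h2]
    rw [he2, he] at ih'
    exact (Relation.ReflTransGen.single hstep).trans ih'
lemma lolli_adj_path {n m : ℕ} {i j : Fin (n+1)} (h : (i:ℕ) + 1 = (j:ℕ)) :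
    (lollipop n m).Adj (Sum.inl i) (Sum.inl j) := by
  refine (SimpleGraph.fromRel_adj _ _ _).2 ⟨?_, Or.inl h⟩
  simp only [ne_eq, Sum.inl.injEq]
  intro he; rw [he] at h; omega

lemma lolli_adj_mid {n m : ℕ} {j : Fin (m+1)} (hj : j ≠ 0) :
    (lollipop n m).Adj (Sum.inl (0 : Fin (n+1))) (Sum.inr j) :=
  (SimpleGraph.fromRel_adj _ _ _).2 ⟨by simp, Or.inl ⟨rfl, hj⟩⟩

lemma lolli_adj_hub {n m : ℕ} {j : Fin (m+1)} (hj : j ≠ 0) :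
    (lollipop n m).Adj (Sum.inr (0 : Fin (m+1))) (Sum.inr j) :=
  (SimpleGraph.fromRel_adj _ _ _).2
    ⟨by simp only [ne_eq, Sum.inr.injEq]; exact fun e => hj e.symm, Or.inl ⟨rfl, hj⟩⟩

def pathPot (n m k : ℕ) (p : (Fin (n+1) ⊕ Fin (m+1)) → ℕ) : ℕ :=
  ∑ i : Fin (n+1), if k ≤ (i:ℕ) then p (Sum.inl i) * 2^(i:ℕ) else 0

lemma pathSolv (n m : ℕ) : ∀ d k, k + d = n →
    ∀ p : (Fin (n+1) ⊕ Fin (m+1)) → ℕ, 2^n + 1 ≤ pathPot n m k p + 2^k →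
    Solvable (lollipop n m) (Sum.inl (Fin.last n)) p := by
  intro d
  induction d with
  | zero =>
    intro k hk p hpot
    subst hk
    simp only [Nat.add_zero] at *
    have hsum : pathPot k m k p = p (Sum.inl (Fin.last k)) * 2^k := by
      unfold pathPot
      rw [Finset.sum_eq_single (Fin.last k)]
      · simp [Fin.last]
      · intro i _ hi
        have : (i : ℕ) < k := by
          have := i.isLt
          rcases Nat.lt_or_ge (i : ℕ) k with h | h
          · exact h
          · exfalso; apply hi; apply Fin.ext; simp [Fin.last]; omega
        simp [Nat.not_le.2 this]
      · intro h; exact absurd (Finset.mem_univ _) h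
    rw [hsum] at hpot
    rcases Nat.eq_zero_or_pos (p (Sum.inl (Fin.last k))) with h | h
    · rw [h, Nat.zero_mul, Nat.zero_add] at hpot; omega
    · exact ⟨p, Relation.ReflTransGen.refl, h⟩
  | succ d ih =>
    intro k hk p hpot
    have hkn : k < n := by omega
    set ik : Fin (n+1) := ⟨k, by omega⟩ with hik
    set ik1 : Fin (n+1) := ⟨k+1, by omega⟩ with hik1
    have hadj : (lollipop n m).Adj (Sum.inl ik) (Sum.inl ik1) := lolli_adj_path rfl
    set a := p (Sum.inl ik) with ha
    have hmv := moveMany hadj (a/2) p (by omega)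
    set q : (Fin (n+1) ⊕ Fin (m+1)) → ℕ := fun x =>
      if x = Sum.inl ik then p (Sum.inl ik) - 2 * (a/2)
      else if x = Sum.inl ik1 then p (Sum.inl ik1) + a/2 else p x with hq
    have hne : (Sum.inl ik : Fin (n+1) ⊕ Fin (m+1)) ≠ Sum.inl ik1 := by
      simp only [ne_eq, Sum.inl.injEq]
      intro he; have := congrArg Fin.val he; simp [hik, hik1] at this
    -- potential computations
    have hvik : ((ik : Fin (n+1)) : ℕ) = k := rfl
    have hvik1 : ((ik1 : Fin (n+1)) : ℕ) = k + 1 := rfl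
    have hsplit : pathPot n m k p = pathPot n m (k+1) p + a * 2^k := by
      have hpt : ∀ i : Fin (n+1), (if k ≤ (i:ℕ) then p (Sum.inl i) * 2^(i:ℕ) else 0) =
          (if k+1 ≤ (i:ℕ) then p (Sum.inl i) * 2^(i:ℕ) else 0) +
          (if i = ik then a * 2^k else 0) := by
        intro i
        by_cases h1 : i = ik
        · subst h1
          simp only [hvik, if_pos (le_refl k), if_pos rfl, ← ha, if_true]
          rw [if_neg (by omega)]
          omega
        · have hvi : (i : ℕ) ≠ k := by
            intro he; exact h1 (Fin.ext (by rw [hvik, he]))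
          rw [if_neg h1, add_zero]
          by_cases h2 : k + 1 ≤ (i : ℕ)
          · rw [if_pos h2, if_pos (by omega)]
          · rw [if_neg h2, if_neg (by omega)]
      unfold pathPot
      rw [Finset.sum_congr rfl (fun i _ => hpt i), Finset.sum_add_distrib,
        Finset.sum_ite_eq' Finset.univ ik, if_pos (Finset.mem_univ _)]
    have hqpot : pathPot n m (k+1) q = pathPot n m (k+1) p + (a/2) * 2^(k+1) := by
      have hpt : ∀ i : Fin (n+1), (if k+1 ≤ (i:ℕ) then q (Sum.inl i) * 2^(i:ℕ) else 0) =
          (if k+1 ≤ (i:ℕ) then p (Sum.inl i) * 2^(i:ℕ) else 0) +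
          (if i = ik1 then (a/2) * 2^(k+1) else 0) := by
        intro i
        by_cases h1 : i = ik1
        · subst h1
          have hnq : (Sum.inl ik1 : Fin (n+1) ⊕ Fin (m+1)) ≠ Sum.inl ik := Ne.symm hne
          simp only [hq, if_neg hnq, if_pos rfl, hvik1, if_pos (le_refl (k+1)), if_true]
          ring
        · rw [if_neg h1, add_zero]
          by_cases h2 : i = ik
          · subst h2
            rw [if_neg (by rw [hvik]; omega), if_neg (by rw [hvik]; omega)]
          · have : q (Sum.inl i) = p (Sum.inl i) := by
              simp only [hq]
              rw [if_neg (by simpa using h2), if_neg (by simpa using h1)]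
            rw [this]
      unfold pathPot
      rw [Finset.sum_congr rfl (fun i _ => hpt i), Finset.sum_add_distrib,
        Finset.sum_ite_eq' Finset.univ ik1, if_pos (Finset.mem_univ _)]
    have hIH := ih (k+1) (by omega) q ?_
    · exact rtg_solvable hmv hIH
    · rw [hqpot]
      have h1 : a * 2^k ≤ (a/2) * 2^(k+1) + 2^k := by
        have h2 : a ≤ 2*(a/2) + 1 := by omega
        calc a * 2^k ≤ (2*(a/2)+1) * 2^k := Nat.mul_le_mul_right _ h2
          _ = (a/2) * 2^(k+1) + 2^k := by ring
      have h3 : (2:ℕ)^(k+1) = 2 * 2^k := by ring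
      rw [hsplit] at hpot
      omega

lemma deliverEvens (n m : ℕ) (s : Finset (Fin (m+1))) (h0 : (0 : Fin (m+1)) ∉ s) :
    ∀ p : (Fin (n+1) ⊕ Fin (m+1)) → ℕ,
    ∃ q, Relation.ReflTransGen (PebMove (lollipop n m)) p q ∧
      q (Sum.inl (0 : Fin (n+1))) = p (Sum.inl 0) + ∑ j ∈ s, p (Sum.inr j) / 2 ∧
      (∀ i : Fin (n+1), i ≠ 0 → q (Sum.inl i) = p (Sum.inl i)) ∧
      (∀ j ∈ s, q (Sum.inr j) = p (Sum.inr j) % 2) ∧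
      (∀ j : Fin (m+1), j ∉ s → q (Sum.inr j) = p (Sum.inr j)) := by
  induction s using Finset.induction_on with
  | empty => intro p; exact ⟨p, Relation.ReflTransGen.refl, by simp, fun _ _ => rfl,
      fun j hj => absurd hj (Finset.notMem_empty j), fun _ _ => rfl⟩
  | @insert j s hj ih =>
    intro p
    have hj0 : j ≠ 0 := fun he => h0 (by rw [← he]; exact Finset.mem_insert_self j s)
    have h0s : (0 : Fin (m+1)) ∉ s := fun hh => h0 (Finset.mem_insert_of_mem hh)
    set c := p (Sum.inr j) / 2 with hc
    have hadj : (lollipop n m).Adj (Sum.inr j) (Sum.inl (0 : Fin (n+1))) :=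
      (lolli_adj_mid hj0).symm
    have hmv := moveMany hadj c p (by omega)
    set p1 : (Fin (n+1) ⊕ Fin (m+1)) → ℕ := fun x =>
      if x = Sum.inr j then p (Sum.inr j) - 2 * c
      else if x = Sum.inl (0 : Fin (n+1)) then p (Sum.inl 0) + c else p x with hp1
    obtain ⟨q, hq, hq0, hqi, hqs, hqout⟩ := ih h0s p1
    have hp1l0 : p1 (Sum.inl (0 : Fin (n+1))) = p (Sum.inl 0) + c := by simp [hp1]
    have hp1l : ∀ i : Fin (n+1), i ≠ 0 → p1 (Sum.inl i) = p (Sum.inl i) := by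
      intro i hi; simp [hp1, hi]
    have hp1r : ∀ j' : Fin (m+1), j' ≠ j → p1 (Sum.inr j') = p (Sum.inr j') := by
      intro j' hj'; simp [hp1, hj']
    have hp1rj : p1 (Sum.inr j) = p (Sum.inr j) - 2 * c := by simp [hp1]
    refine ⟨q, hmv.trans hq, ?_, ?_, ?_, ?_⟩
    · rw [hq0, hp1l0, Finset.sum_insert hj]
      have : ∑ j' ∈ s, p1 (Sum.inr j') / 2 = ∑ j' ∈ s, p (Sum.inr j') / 2 :=
        Finset.sum_congr rfl (fun j' hj' => by rw [hp1r j' (fun he => hj (he ▸ hj'))])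
      rw [this]; ring
    · intro i hi; rw [hqi i hi, hp1l i hi]
    · intro j' hj'
      rcases Finset.mem_insert.1 hj' with he | hmem
      · subst he
        rw [hqout j' hj, hp1rj]; omega
      · rw [hqs j' hmem, hp1r j' (fun he => hj (he ▸ hmem))]
    · intro j' hj'
      have h1 : j' ∉ s := fun hh => hj' (Finset.mem_insert_of_mem hh)
      have h2 : j' ≠ j := fun he => hj' (he ▸ Finset.mem_insert_self j s)
      rw [hqout j' h1, hp1r j' h2]

lemma deliverOnes (n m : ℕ) (s : Finset (Fin (m+1))) (h0 : (0 : Fin (m+1)) ∉ s) :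
    ∀ p : (Fin (n+1) ⊕ Fin (m+1)) → ℕ, (∀ j ∈ s, 1 ≤ p (Sum.inr j)) →
    2 * s.card ≤ p (Sum.inr 0) →
    ∃ q, Relation.ReflTransGen (PebMove (lollipop n m)) p q ∧
      q (Sum.inl (0 : Fin (n+1))) = p (Sum.inl 0) + s.card ∧
      (∀ i : Fin (n+1), i ≠ 0 → q (Sum.inl i) = p (Sum.inl i)) ∧
      q (Sum.inr 0) = p (Sum.inr 0) - 2 * s.card := by
  induction s using Finset.induction_on with
  | empty => intro p _ _; exact ⟨p, Relation.ReflTransGen.refl, by simp, fun _ _ => rfl, by simp⟩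
  | @insert j s hj ih =>
    intro p hones hcard
    have hj0 : j ≠ 0 := fun he => h0 (by rw [← he]; exact Finset.mem_insert_self j s)
    have h0s : (0 : Fin (m+1)) ∉ s := fun hh => h0 (Finset.mem_insert_of_mem hh)
    rw [Finset.card_insert_of_notMem hj] at hcard
    have hpj : 1 ≤ p (Sum.inr j) := hones j (Finset.mem_insert_self j s)
    -- move a pair from hub to middle j
    set p1 : (Fin (n+1) ⊕ Fin (m+1)) → ℕ := fun x =>
      if x = Sum.inr (0 : Fin (m+1)) then p (Sum.inr 0) - 2
      else if x = Sum.inr j then p (Sum.inr j) + 1 else p x with hp1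
    have hmv1 : PebMove (lollipop n m) p p1 :=
      ⟨Sum.inr 0, Sum.inr j, lolli_adj_hub hj0, by omega, rfl⟩
    have hne1 : (Sum.inr j : Fin (n+1) ⊕ Fin (m+1)) ≠ Sum.inr (0 : Fin (m+1)) := by
      simp [hj0]
    have hp1j : p1 (Sum.inr j) = p (Sum.inr j) + 1 := by simp [hp1, hne1]
    -- move a pair from middle j to inl 0
    set p2 : (Fin (n+1) ⊕ Fin (m+1)) → ℕ := fun x =>
      if x = Sum.inr j then p1 (Sum.inr j) - 2
      else if x = Sum.inl (0 : Fin (n+1)) then p1 (Sum.inl 0) + 1 else p1 x with hp2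
    have hmv2 : PebMove (lollipop n m) p1 p2 :=
      ⟨Sum.inr j, Sum.inl 0, (lolli_adj_mid hj0).symm, by omega, rfl⟩
    have hp2l0 : p2 (Sum.inl (0 : Fin (n+1))) = p (Sum.inl 0) + 1 := by simp [hp2, hp1]
    have hp2li : ∀ i : Fin (n+1), i ≠ 0 → p2 (Sum.inl i) = p (Sum.inl i) := by
      intro i hi; simp [hp2, hp1, hi]
    have hp2r0 : p2 (Sum.inr (0 : Fin (m+1))) = p (Sum.inr 0) - 2 := by
      simp [hp2, hp1, Ne.symm hne1]
    have hp2rj : ∀ j' : Fin (m+1), j' ≠ j → j' ≠ 0 → p2 (Sum.inr j') = p (Sum.inr j') := by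
      intro j' h1 h2; simp [hp2, hp1, h1, h2]
    obtain ⟨q, hq, hq0, hqi, hqr0⟩ := ih h0s p2
      (by intro j' hj'
          have h1 : j' ≠ j := fun he => hj (he ▸ hj')
          have h2 : j' ≠ 0 := fun he => h0s (he ▸ hj')
          rw [hp2rj j' h1 h2]; exact hones j' (Finset.mem_insert_of_mem hj'))
      (by rw [hp2r0]; omega)
    refine ⟨q, (Relation.ReflTransGen.single hmv1).trans
      ((Relation.ReflTransGen.single hmv2).trans hq), ?_, ?_, ?_⟩
    · rw [hq0, hp2l0, Finset.card_insert_of_notMem hj]; ring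
    · intro i hi; rw [hqi i hi, hp2li i hi]
    · rw [hqr0, hp2r0, Finset.card_insert_of_notMem hj]; omega

lemma deliverHub (n m : ℕ) (hm : 1 ≤ m) (t : ℕ) (p : (Fin (n+1) ⊕ Fin (m+1)) → ℕ)
    (h : 4 * t ≤ p (Sum.inr 0)) :
    ∃ q, Relation.ReflTransGen (PebMove (lollipop n m)) p q ∧
      q (Sum.inl (0 : Fin (n+1))) = p (Sum.inl 0) + t ∧
      (∀ i : Fin (n+1), i ≠ 0 → q (Sum.inl i) = p (Sum.inl i)) := by
  set one : Fin (m+1) := ⟨1, by omega⟩ with hone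
  have hone0 : one ≠ 0 := by
    intro he; have := congrArg Fin.val he; simp [hone] at this
  have hmv1 := moveMany (lolli_adj_hub hone0) (2*t) p (by omega)
  set p1 : (Fin (n+1) ⊕ Fin (m+1)) → ℕ := fun x =>
    if x = Sum.inr (0 : Fin (m+1)) then p (Sum.inr 0) - 2 * (2*t)
    else if x = Sum.inr one then p (Sum.inr one) + 2*t else p x with hp1
  have hner : (Sum.inr one : Fin (n+1) ⊕ Fin (m+1)) ≠ Sum.inr (0 : Fin (m+1)) := by
    simp [hone0]
  have hp1one : p1 (Sum.inr one) = p (Sum.inr one) + 2*t := by simp [hp1, hner]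
  have hmv2 := moveMany (lolli_adj_mid hone0).symm t p1 (by rw [hp1one]; omega)
  set p2 : (Fin (n+1) ⊕ Fin (m+1)) → ℕ := fun x =>
    if x = Sum.inr one then p1 (Sum.inr one) - 2 * t
    else if x = Sum.inl (0 : Fin (n+1)) then p1 (Sum.inl 0) + t else p1 x with hp2
  refine ⟨p2, hmv1.trans hmv2, ?_, ?_⟩
  · simp [hp2, hp1]
  · intro i hi; simp [hp2, hp1, hi]

lemma lolli_main (n m : ℕ) (hm : 2^(n+1) + 1 ≤ m)
    (p : (Fin (n+1) ⊕ Fin (m+1)) → ℕ)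
    (hw : 2^(n+1) + m ≤
      2 * (∑ i : Fin (n+1), if (i:ℕ) < n then p (Sum.inl i) * 2^(i:ℕ) else 0) +
      ∑ j : Fin (m+1), p (Sum.inr j)) :
    Solvable (lollipop n m) (Sum.inl (Fin.last n)) p := by
  set S' : ℕ := ∑ i : Fin (n+1), if (i:ℕ) < n then p (Sum.inl i) * 2^(i:ℕ) else 0 with hS'
  set B : ℕ := ∑ j : Fin (m+1), p (Sum.inr j) with hB
  have hpow : (2:ℕ)^(n+1) = 2 * 2^n := by ring
  have hSle : S' ≤ pathPot n m 0 p := by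
    apply Finset.sum_le_sum
    intro i _
    rw [if_pos (Nat.zero_le _)]
    split
    · exact le_refl _
    · exact Nat.zero_le _
  by_cases hbig : 2^n ≤ pathPot n m 0 p
  · exact pathSolv n m n 0 (by omega) p (by simpa using by omega)
  · push_neg at hbig
    set t : ℕ := 2^n - pathPot n m 0 p with ht
    have htpos : 1 ≤ t := by omega
    have htle : t + S' ≤ 2^n := by omega
    -- middle vertices
    set M : Finset (Fin (m+1)) := Finset.univ.erase 0 with hM
    have h0M : (0 : Fin (m+1)) ∉ M := Finset.notMem_erase 0 _
    have hMcard : M.card = m := by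
      rw [hM, Finset.card_erase_of_mem (Finset.mem_univ _), Finset.card_univ, Fintype.card_fin]
      omega
    set b0 : ℕ := p (Sum.inr 0) with hb0
    have hBsplit : B = b0 + ∑ j ∈ M, p (Sum.inr j) := by
      rw [hB, hM, hb0, Finset.add_sum_erase Finset.univ (fun j => p (Sum.inr j)) (Finset.mem_univ 0)]
    set N1 : ℕ := ∑ j ∈ M, p (Sum.inr j) / 2 with hN1
    set O : Finset (Fin (m+1)) := M.filter (fun j => p (Sum.inr j) % 2 = 1) with hO
    set N2 : ℕ := O.card with hN2
    have hMsum : ∑ j ∈ M, p (Sum.inr j) = 2 * N1 + N2 := by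
      have h1 : ∀ j ∈ M, p (Sum.inr j) =
          2 * (p (Sum.inr j) / 2) + (if p (Sum.inr j) % 2 = 1 then 1 else 0) := by
        intro j _; split <;> omega
      rw [Finset.sum_congr rfl h1, Finset.sum_add_distrib, ← Finset.mul_sum, hN2, hO,
        Finset.sum_boole]
      simp [hN1]
    have hN2m : N2 ≤ m := by
      have h := Finset.card_le_card (Finset.filter_subset (fun j => p (Sum.inr j) % 2 = 1) M)
      rw [← hO] at h; omega
    -- phase 1
    obtain ⟨q1, hmv1, hq1l0, hq1li, hq1M, hq1out⟩ := deliverEvens n m M h0M p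
    have hq1r0 : q1 (Sum.inr 0) = b0 := hq1out 0 h0M
    -- phase 2
    set t' : ℕ := t - N1 with ht'
    set t2 : ℕ := min N2 (min (b0/2) t') with ht2
    obtain ⟨s, hsO, hscard⟩ := Finset.exists_subset_card_eq (show t2 ≤ O.card by omega)
    have h0s : (0 : Fin (m+1)) ∉ s := fun hh => h0M (Finset.filter_subset _ _ (hsO hh))
    obtain ⟨q2, hmv2, hq2l0, hq2li, hq2r0⟩ := deliverOnes n m s h0s q1
      (by intro j hj
          have hjO := hsO hj
          have hjM : j ∈ M := Finset.filter_subset _ _ hjO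
          have : p (Sum.inr j) % 2 = 1 := (Finset.mem_filter.1 hjO).2
          rw [hq1M j hjM, this])
      (by rw [hq1r0, hscard]; omega)
    -- phase 3
    set t3 : ℕ := t' - t2 with ht3
    obtain ⟨q3, hmv3, hq3l0, hq3li⟩ := deliverHub n m (by omega) t3 q2
      (by rw [hq2r0, hq1r0, hscard]; omega)
    -- final potential
    set D : ℕ := N1 + t2 + t3 with hD
    have hq3l0' : q3 (Sum.inl (0 : Fin (n+1))) = p (Sum.inl 0) + D := by
      rw [hq3l0, hq2l0, hq1l0, hscard]; omega
    have hq3li' : ∀ i : Fin (n+1), i ≠ 0 → q3 (Sum.inl i) = p (Sum.inl i) := by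
      intro i hi; rw [hq3li i hi, hq2li i hi, hq1li i hi]
    have hDt : t ≤ D := by omega
    have hpot3 : pathPot n m 0 q3 = pathPot n m 0 p + D := by
      unfold pathPot
      have hpt : ∀ i : Fin (n+1), (if 0 ≤ (i:ℕ) then q3 (Sum.inl i) * 2^(i:ℕ) else 0) =
          (if 0 ≤ (i:ℕ) then p (Sum.inl i) * 2^(i:ℕ) else 0) +
          (if i = 0 then D else 0) := by
        intro i
        by_cases h1 : i = 0
        · subst h1
          rw [if_pos (Nat.zero_le _), if_pos (Nat.zero_le _), if_pos rfl, hq3l0']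
          have : ((0 : Fin (n+1)) : ℕ) = 0 := rfl
          rw [this, pow_zero]; ring
        · rw [if_pos (Nat.zero_le _), if_pos (Nat.zero_le _), if_neg h1, hq3li' i h1, add_zero]
      rw [Finset.sum_congr rfl (fun i _ => hpt i), Finset.sum_add_distrib,
        Finset.sum_ite_eq' Finset.univ (0 : Fin (n+1)), if_pos (Finset.mem_univ _)]
    have hfin : Solvable (lollipop n m) (Sum.inl (Fin.last n)) q3 := by
      apply pathSolv n m n 0 (by omega) q3
      rw [hpot3, pow_zero]
      omega
    exact rtg_solvable (hmv1.trans (hmv2.trans hmv3)) hfin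

theorem stmt17 (n m : ℕ) (hn : 1 ≤ n) (hm : 2 ^ (n + 1) + 1 ≤ m) :
    (confWeight (wL n (m := m)) (fun _ => 1) = 2 ^ (n + 1) - 2 + (m + 1)) ∧
    ∀ p : (Fin (n + 1) ⊕ Fin (m + 1)) → ℕ,
      ((2 : ℝ) ^ (n + 1) - 2 + (m + 1)) < confWeight (wL n) p →
      Solvable (lollipop n m) (Sum.inl (Fin.last n)) p := by

  have hgeo : ∀ N : ℕ, ∑ i ∈ Finset.range N, (2:ℝ)^(i+1) = 2^(N+1) - 2 := by
    intro N
    induction N with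
    | zero => simp
    | succ k ih => rw [Finset.sum_range_succ, ih]; ring
  constructor
  · unfold confWeight
    rw [Fintype.sum_sum_type]
    simp only [Nat.cast_one, one_mul]
    have h2 : ∑ j : Fin (m+1), wL n (m := m) (Sum.inr j) = ((m:ℝ)+1) := by
      simp [wL]
    have h1 : ∑ i : Fin (n+1), wL n (m := m) (Sum.inl i) = 2^(n+1) - 2 := by
      have heq : ∀ i : Fin (n+1), wL n (m := m) (Sum.inl i) =
          if (i:ℕ) = n then (0:ℝ) else 2^((i:ℕ)+1) := fun i => rfl
      rw [Finset.sum_congr rfl (fun i _ => heq i),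
        Fin.sum_univ_eq_sum_range (fun i => if i = n then (0:ℝ) else 2^(i+1)) (n+1),
        Finset.sum_range_succ, if_pos rfl, add_zero]
      have h3 : ∀ i ∈ Finset.range n, (if i = n then (0:ℝ) else 2^(i+1)) = 2^(i+1) := by
        intro i hi
        exact if_neg (Nat.ne_of_lt (Finset.mem_range.1 hi))
      rw [Finset.sum_congr rfl h3, hgeo n]
    rw [h1, h2]
  · intro p hp
    apply lolli_main n m hm p
    set X : ℕ := 2 * (∑ i : Fin (n+1), if (i:ℕ) < n then p (Sum.inl i) * 2^(i:ℕ) else 0) +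
      ∑ j : Fin (m+1), p (Sum.inr j) with hX
    have hcw : confWeight (wL n (m := m)) p = (X : ℝ) := by
      unfold confWeight
      rw [Fintype.sum_sum_type, hX]
      push_cast
      rw [Finset.mul_sum]
      congr 1
      · apply Finset.sum_congr rfl
        intro i _
        have hwl : wL n (m := m) (Sum.inl i) = if (i:ℕ) = n then (0:ℝ) else 2^((i:ℕ)+1) := rfl
        rw [hwl]
        rcases Nat.lt_or_ge (i:ℕ) n with h | h
        · rw [if_neg (by omega), if_pos h]; push_cast; ring
        · have hin : (i:ℕ) = n := by have := i.isLt; omega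
          rw [if_pos hin, if_neg (by omega)]; simp
      · apply Finset.sum_congr rfl; intro j _
        have : wL n (m := m) (Sum.inr j) = 1 := rfl
        rw [this, mul_one]
    rw [hcw] at hp
    have hlt : ((2^(n+1) + m : ℕ) : ℝ) < ((X + 1 : ℕ) : ℝ) := by push_cast; linarith
    have := Nat.cast_lt.1 hlt
    omega
end

section
/- Let r, v_1, U = {u_0, u_1, …, u_N} with N = 2^{n+1} be as in the lollipop L_n. Suppose each u_i for 1 ≤ i ≤ N is adjacent to both v_1 and u_0 (and to no other vertices of U). If a configuration places q pebbles in total on U, then one can move at least ⌈(q − 3)/4⌉ pebbles from U onto v_1 when the number a of vertices u_1,…,u_N holding an odd number of pebbles satisfies a ≤ ⌊p(u_0)/2⌋, using only pebbles on U. -/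
open SimpleGraph Finset

/-- A pebbling move whose source vertex lies in the set `S`. -/
def PebMoveFrom {V : Type*} [DecidableEq V] (G : SimpleGraph V) (S : Set V)
    (p q : V → ℕ) : Prop :=
  ∃ u v, u ∈ S ∧ G.Adj u v ∧ 2 ≤ p u ∧
    q = fun x => if x = u then p u - 2 else if x = v then p v + 1 else p x

namespace Stmt18

abbrev VV (n : ℕ) := Fin (n + 1) ⊕ Fin (2 ^ (n + 1) + 1)

def mv (n : ℕ) (u v : VV n) (p : VV n → ℕ) : VV n → ℕ :=
  fun x => if x = u then p u - 2 else if x = v then p v + 1 else p x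

variable {n : ℕ}

lemma adj1 (j : Fin (2 ^ (n + 1) + 1)) (hj : j ≠ 0) :
    (lollipop n (2 ^ (n + 1))).Adj (Sum.inr (0 : Fin (2 ^ (n + 1) + 1))) (Sum.inr j) := by
  rw [lollipop, SimpleGraph.fromRel_adj]
  exact ⟨by simpa using (Ne.symm hj), Or.inl ⟨rfl, hj⟩⟩

lemma adj2 (j : Fin (2 ^ (n + 1) + 1)) (hj : j ≠ 0) :
    (lollipop n (2 ^ (n + 1))).Adj (Sum.inr j) (Sum.inl (0 : Fin (n + 1))) := by
  rw [lollipop, SimpleGraph.fromRel_adj]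
  exact ⟨by simp, Or.inr ⟨rfl, hj⟩⟩

lemma step (p : VV n → ℕ) (j : Fin (2 ^ (n + 1) + 1)) (v : VV n)
    (hadj : (lollipop n (2 ^ (n + 1))).Adj (Sum.inr j) v) (h2 : 2 ≤ p (Sum.inr j)) :
    PebMoveFrom (lollipop n (2 ^ (n + 1))) {x | ∃ j, x = Sum.inr j} p
      (mv n (Sum.inr j) v p) :=
  ⟨Sum.inr j, v, ⟨j, rfl⟩, hadj, h2, rfl⟩

lemma sum_update_add {m : ℕ} (f : Fin m → ℕ) (j : Fin m) (v : ℕ) :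
    Finset.univ.sum (Function.update f j v) + f j = Finset.univ.sum f + v := by
  show (∑ k, Function.update f j v k) + f j = (∑ k, f k) + v
  rw [Finset.sum_update_of_mem (Finset.mem_univ j),
      ← Finset.add_sum_erase _ f (Finset.mem_univ j),
      Finset.sdiff_singleton_eq_erase]
  ring

lemma mv_inl_rr (p : VV n → ℕ) (i j : Fin (2 ^ (n + 1) + 1)) :
    mv n (Sum.inr i) (Sum.inr j) p (Sum.inl 0) = p (Sum.inl 0) := by
  simp [mv]

lemma mv_inl_rl (p : VV n → ℕ) (j : Fin (2 ^ (n + 1) + 1)) :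
    mv n (Sum.inr j) (Sum.inl 0) p (Sum.inl 0) = p (Sum.inl 0) + 1 := by
  simp [mv]

lemma comp_mv_rl (p : VV n → ℕ) (j : Fin (2 ^ (n + 1) + 1)) :
    (fun k => mv n (Sum.inr j) (Sum.inl 0) p (Sum.inr k)) =
      Function.update (fun k => p (Sum.inr k)) j (p (Sum.inr j) - 2) := by
  funext k
  by_cases hk : k = j
  · subst hk; simp [mv]
  · simp [mv, Function.update, hk]

lemma comp_mv_rr (p : VV n → ℕ) (i j : Fin (2 ^ (n + 1) + 1)) (hij : i ≠ j) :
    (fun k => mv n (Sum.inr i) (Sum.inr j) p (Sum.inr k)) =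
      Function.update (Function.update (fun k => p (Sum.inr k)) i (p (Sum.inr i) - 2))
        j (p (Sum.inr j) + 1) := by
  funext k
  by_cases hk : k = j
  · subst hk; simp [mv, Function.update, hij, (Ne.symm hij)]
  · by_cases hk2 : k = i
    · subst hk2; simp [mv, Function.update, hk]
    · simp [mv, Function.update, hk, hk2]

lemma ceil_le_zero (q : ℕ) (h : q ≤ 3) : ⌈((q : ℚ) - 3) / 4⌉ ≤ 0 := by
  rw [show (0 : ℤ) = ((0 : ℤ) : ℤ) from rfl, Int.ceil_le]
  have : (q : ℚ) ≤ 3 := by exact_mod_cast h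
  push_cast
  linarith

lemma ceil_step (x c : ℚ) (hc : c ≤ 1) : ⌈x⌉ ≤ 1 + ⌈x - c⌉ := by
  have h1 : ⌈x - 1⌉ ≤ ⌈x - c⌉ := Int.ceil_mono (by linarith)
  have h2 : ⌈x - (1 : ℚ)⌉ = ⌈x⌉ - 1 := by
    rw [show x - 1 = x + ((-1 : ℤ) : ℚ) by push_cast; ring, Int.ceil_add_intCast]
    omega
  omega

lemma ceil_chunk (q d : ℕ) (hd : d ≤ q) (hd4 : d ≤ 4) (hd0 : 1 ≤ d) :
    ⌈((q : ℚ) - 3) / 4⌉ ≤ 1 + ⌈(((q - d : ℕ) : ℚ) - 3) / 4⌉ := by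
  have hcast : ((q - d : ℕ) : ℚ) = (q : ℚ) - d := by
    push_cast [hd]; ring
  rw [hcast]
  have : ((q : ℚ) - (d : ℚ) - 3) / 4 = ((q : ℚ) - 3) / 4 - (d : ℚ) / 4 := by ring
  rw [this]
  apply ceil_step
  have : (d : ℚ) ≤ 4 := by exact_mod_cast hd4
  linarith


lemma mv_rl_src (p : VV n → ℕ) (j : Fin (2 ^ (n + 1) + 1)) :
    mv n (Sum.inr j) (Sum.inl 0) p (Sum.inr j) = p (Sum.inr j) - 2 := by simp [mv]

lemma mv_rl_at (p : VV n → ℕ) (j k : Fin (2 ^ (n + 1) + 1)) (hk : k ≠ j) :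
    mv n (Sum.inr j) (Sum.inl 0) p (Sum.inr k) = p (Sum.inr k) := by simp [mv, hk]

lemma mv_rr_src (p : VV n → ℕ) (i j : Fin (2 ^ (n + 1) + 1)) :
    mv n (Sum.inr i) (Sum.inr j) p (Sum.inr i) = p (Sum.inr i) - 2 := by simp [mv]

lemma mv_rr_tgt (p : VV n → ℕ) (i j : Fin (2 ^ (n + 1) + 1)) (hij : j ≠ i) :
    mv n (Sum.inr i) (Sum.inr j) p (Sum.inr j) = p (Sum.inr j) + 1 := by simp [mv, hij]

lemma mv_rr_at (p : VV n → ℕ) (i j k : Fin (2 ^ (n + 1) + 1)) (hki : k ≠ i) (hkj : k ≠ j) :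
    mv n (Sum.inr i) (Sum.inr j) p (Sum.inr k) = p (Sum.inr k) := by simp [mv, hki, hkj]

lemma one_ne : (1 : Fin (2 ^ (n + 1) + 1)) ≠ 0 := by
  have h : 1 < 2 ^ (n + 1) + 1 := by
    have : 1 ≤ 2 ^ (n + 1) := Nat.one_le_two_pow
    omega
  simp [Fin.ext_iff, Fin.val_one', Nat.mod_eq_of_lt h]

def R (n : ℕ) : (VV n → ℕ) → (VV n → ℕ) → Prop :=
  PebMoveFrom (lollipop n (2 ^ (n + 1))) {x | ∃ j, x = Sum.inr j}

lemma chunk1 (p : VV n → ℕ) (j : Fin (2 ^ (n + 1) + 1)) (hj : j ≠ 0)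
    (h2 : 2 ≤ p (Sum.inr j)) :
    ∃ p1, Relation.ReflTransGen (R n) p p1 ∧
      p1 (Sum.inl 0) = p (Sum.inl 0) + 1 ∧
      (fun k => p1 (Sum.inr k)) =
        Function.update (fun k => p (Sum.inr k)) j (p (Sum.inr j) - 2) := by
  refine ⟨mv n (Sum.inr j) (Sum.inl 0) p,
    Relation.ReflTransGen.single (step p j _ (adj2 j hj) h2),
    mv_inl_rl p j, comp_mv_rl p j⟩

lemma chunk2 (p : VV n → ℕ) (j : Fin (2 ^ (n + 1) + 1)) (hj : j ≠ 0)
    (hpj : p (Sum.inr j) = 1) (hp0 : 2 ≤ p (Sum.inr 0)) :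
    ∃ p2, Relation.ReflTransGen (R n) p p2 ∧
      p2 (Sum.inl 0) = p (Sum.inl 0) + 1 ∧
      (fun k => p2 (Sum.inr k)) =
        Function.update (Function.update (fun k => p (Sum.inr k)) 0
          (p (Sum.inr 0) - 2)) j 0 := by
  set p1 := mv n (Sum.inr 0) (Sum.inr j) p with hp1
  have hv1 : p1 (Sum.inr j) = 2 := by rw [hp1, mv_rr_tgt p 0 j hj, hpj]
  have m1 : R n p p1 := step p 0 _ (adj1 j hj) hp0
  have m2 : R n p1 (mv n (Sum.inr j) (Sum.inl 0) p1) :=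
    step p1 j _ (adj2 j hj) (by omega)
  refine ⟨_, (Relation.ReflTransGen.single m1).tail m2, ?_, ?_⟩
  · rw [mv_inl_rl, hp1, mv_inl_rr]
  · funext k
    by_cases hkj : k = j
    · subst hkj
      rw [mv_rl_src, hv1, Function.update_self]
    · rw [mv_rl_at _ _ _ hkj, Function.update_of_ne hkj]
      by_cases hk0 : k = 0
      · subst hk0
        rw [hp1, mv_rr_src, Function.update_self]
      · rw [hp1, mv_rr_at p 0 j k hk0 hkj, Function.update_of_ne hk0]

lemma chunk3 (p : VV n → ℕ) (hp0 : 4 ≤ p (Sum.inr 0)) :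
    ∃ p3, Relation.ReflTransGen (R n) p p3 ∧
      p3 (Sum.inl 0) = p (Sum.inl 0) + 1 ∧
      (fun k => p3 (Sum.inr k)) =
        Function.update (fun k => p (Sum.inr k)) 0 (p (Sum.inr 0) - 4) := by
  have h10 : (1 : Fin (2 ^ (n + 1) + 1)) ≠ 0 := one_ne
  set p1 := mv n (Sum.inr 0) (Sum.inr 1) p with hp1
  set p2 := mv n (Sum.inr 0) (Sum.inr 1) p1 with hp2
  have hv10 : p1 (Sum.inr 0) = p (Sum.inr 0) - 2 := by rw [hp1, mv_rr_src]
  have hv11 : p1 (Sum.inr 1) = p (Sum.inr 1) + 1 := by rw [hp1, mv_rr_tgt p 0 1 h10]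
  have hv20 : p2 (Sum.inr 0) = p (Sum.inr 0) - 4 := by
    rw [hp2, mv_rr_src, hv10]; omega
  have hv21 : p2 (Sum.inr 1) = p (Sum.inr 1) + 2 := by
    rw [hp2, mv_rr_tgt p1 0 1 h10, hv11]
  have m1 : R n p p1 := step p 0 _ (adj1 1 h10) (by omega)
  have m2 : R n p1 p2 := step p1 0 _ (adj1 1 h10) (by omega)
  have m3 : R n p2 (mv n (Sum.inr 1) (Sum.inl 0) p2) :=
    step p2 1 _ (adj2 1 h10) (by omega)
  refine ⟨_, ((Relation.ReflTransGen.single m1).tail m2).tail m3, ?_, ?_⟩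
  · rw [mv_inl_rl, hp2, mv_inl_rr, hp1, mv_inl_rr]
  · funext k
    by_cases hk1 : k = 1
    · subst hk1
      rw [mv_rl_src, hv21, Function.update_of_ne h10]
      simp
    · rw [mv_rl_at _ _ _ hk1]
      by_cases hk0 : k = 0
      · subst hk0
        rw [hv20, Function.update_self]
      · rw [Function.update_of_ne hk0, hp2, mv_rr_at p1 0 1 k hk0 hk1,
          hp1, mv_rr_at p 0 1 k hk0 hk1]


lemma main (n q : ℕ) : ∀ p : VV n → ℕ,
    q = ∑ j, p (Sum.inr j) →
    (Finset.univ.filter fun j : Fin (2 ^ (n + 1) + 1) =>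
        j ≠ 0 ∧ Odd (p (Sum.inr j))).card ≤ p (Sum.inr 0) / 2 →
    ∃ p', Relation.ReflTransGen (R n) p p' ∧
      (p (Sum.inl 0) : ℤ) + ⌈((q : ℚ) - 3) / 4⌉ ≤ (p' (Sum.inl 0) : ℤ) := by
  induction q using Nat.strong_induction_on with
  | _ q IH =>
  intro p hq ha
  by_cases h1 : ∃ j, j ≠ 0 ∧ 2 ≤ p (Sum.inr j)
  · -- Chunk 1: some u_j (j ≠ 0) has ≥ 2 pebbles; move 2 of them to the root.
    obtain ⟨j, hj, h2⟩ := h1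
    obtain ⟨p1, hchain1, hval1, hrestr1⟩ := chunk1 p j hj h2
    have hfj : p (Sum.inr j) ≤ ∑ k, p (Sum.inr k) :=
      Finset.single_le_sum (f := fun k => p (Sum.inr k))
        (fun _ _ => Nat.zero_le _) (Finset.mem_univ j)
    have hq2 : 2 ≤ q := by omega
    have hsum : q - 2 = ∑ k, p1 (Sum.inr k) := by
      rw [hrestr1]
      have hs := sum_update_add (fun k => p (Sum.inr k)) j (p (Sum.inr j) - 2)
      omega
    have hcard : (Finset.univ.filter fun k : Fin (2 ^ (n + 1) + 1) =>
        k ≠ 0 ∧ Odd (p1 (Sum.inr k))).card ≤ p1 (Sum.inr 0) / 2 := by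
      have h0 : p1 (Sum.inr 0) = p (Sum.inr 0) := by
        rw [congrFun hrestr1 0, Function.update_of_ne (Ne.symm hj)]
      have hfe : (Finset.univ.filter fun k : Fin (2 ^ (n + 1) + 1) =>
          k ≠ 0 ∧ Odd (p1 (Sum.inr k))) =
          Finset.univ.filter fun k : Fin (2 ^ (n + 1) + 1) =>
          k ≠ 0 ∧ Odd (p (Sum.inr k)) := by
        apply Finset.filter_congr
        intro k _
        apply and_congr_right
        intro _
        rw [congrFun hrestr1 k]
        by_cases hk : k = j
        · subst hk
          rw [Function.update_self, Nat.odd_iff, Nat.odd_iff]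
          omega
        · rw [Function.update_of_ne hk]
      rw [hfe, h0]; exact ha
    obtain ⟨p', hchain, hle⟩ := IH (q - 2) (by omega) p1 hsum hcard
    refine ⟨p', hchain1.trans hchain, ?_⟩
    have hceil := ceil_chunk q 2 hq2 (by norm_num) (by norm_num)
    rw [hval1] at hle
    push_cast at hle ⊢
    linarith
  · by_cases h2 : ∃ j, j ≠ 0 ∧ Odd (p (Sum.inr j))
    · -- Chunk 2: some u_j has exactly one pebble; fix it with help of u_0.
      obtain ⟨j, hj, hodd⟩ := h2
      have hle1 : p (Sum.inr j) ≤ 1 := by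
        by_contra h; exact h1 ⟨j, hj, by omega⟩
      have hpj : p (Sum.inr j) = 1 := by
        rcases hodd with ⟨m, hm⟩; omega
      have hju : j ∈ Finset.univ.filter fun k : Fin (2 ^ (n + 1) + 1) =>
          k ≠ 0 ∧ Odd (p (Sum.inr k)) := by
        simp [hj, hpj]
      have hcard1 : 1 ≤ (Finset.univ.filter fun k : Fin (2 ^ (n + 1) + 1) =>
          k ≠ 0 ∧ Odd (p (Sum.inr k))).card := Finset.card_pos.mpr ⟨j, hju⟩
      have hp0 : 2 ≤ p (Sum.inr 0) := by omega
      obtain ⟨p2, hchain2, hval2, hrestr2⟩ := chunk2 p j hj hpj hp0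
      have hsplit : ∑ k, p (Sum.inr k) =
          p (Sum.inr 0) + ∑ k ∈ Finset.univ.erase 0, p (Sum.inr k) :=
        (Finset.add_sum_erase _ _ (Finset.mem_univ 0)).symm
      have hfj : p (Sum.inr j) ≤ ∑ k ∈ Finset.univ.erase 0, p (Sum.inr k) :=
        Finset.single_le_sum (f := fun k => p (Sum.inr k))
          (fun _ _ => Nat.zero_le _) (Finset.mem_erase.mpr ⟨hj, Finset.mem_univ j⟩)
      have hq3 : 3 ≤ q := by omega
      have hsum : q - 3 = ∑ k, p2 (Sum.inr k) := by
        rw [hrestr2]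
        have hs1 := sum_update_add (fun k => p (Sum.inr k)) 0 (p (Sum.inr 0) - 2)
        have hs2 := sum_update_add
          (Function.update (fun k => p (Sum.inr k)) 0 (p (Sum.inr 0) - 2)) j 0
        have hgj : Function.update (fun k => p (Sum.inr k)) 0
            (p (Sum.inr 0) - 2) j = 1 := by
          rw [Function.update_of_ne hj]; exact hpj
        omega
      have h0 : p2 (Sum.inr 0) = p (Sum.inr 0) - 2 := by
        rw [congrFun hrestr2 0, Function.update_of_ne (Ne.symm hj), Function.update_self]
      have hfe : (Finset.univ.filter fun k : Fin (2 ^ (n + 1) + 1) =>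
          k ≠ 0 ∧ Odd (p2 (Sum.inr k))) =
          (Finset.univ.filter fun k : Fin (2 ^ (n + 1) + 1) =>
          k ≠ 0 ∧ Odd (p (Sum.inr k))).erase j := by
        ext k
        simp only [Finset.mem_filter, Finset.mem_erase, Finset.mem_univ, true_and]
        rw [congrFun hrestr2 k]
        by_cases hk : k = j
        · subst hk
          simp [Function.update_self, Nat.odd_iff]
        · rw [Function.update_of_ne hk]
          by_cases hk0 : k = 0
          · subst hk0; simp
          · rw [Function.update_of_ne hk0]
            simp [hk, hk0]
      have hcard : (Finset.univ.filter fun k : Fin (2 ^ (n + 1) + 1) =>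
          k ≠ 0 ∧ Odd (p2 (Sum.inr k))).card ≤ p2 (Sum.inr 0) / 2 := by
        rw [hfe, Finset.card_erase_of_mem hju, h0]
        omega
      obtain ⟨p', hchain, hle⟩ := IH (q - 3) (by omega) p2 hsum hcard
      refine ⟨p', hchain2.trans hchain, ?_⟩
      have hceil := ceil_chunk q 3 hq3 (by norm_num) (by norm_num)
      rw [hval2] at hle
      push_cast at hle ⊢
      linarith
    · -- All u_j (j ≠ 0) are empty.
      have hzero : ∀ k : Fin (2 ^ (n + 1) + 1), k ≠ 0 → p (Sum.inr k) = 0 := by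
        intro k hk
        have hn2 : ¬ 2 ≤ p (Sum.inr k) := fun h => h1 ⟨k, hk, h⟩
        have hno : ¬ Odd (p (Sum.inr k)) := fun h => h2 ⟨k, hk, h⟩
        rw [Nat.odd_iff] at hno
        omega
      have hqeq : q = p (Sum.inr 0) := by
        rw [hq, ← Finset.add_sum_erase _ _ (Finset.mem_univ 0),
          Finset.sum_eq_zero (fun k hk => hzero k (Finset.mem_erase.mp hk).1)]
        omega
      by_cases hq3 : q ≤ 3
      · exact ⟨p, Relation.ReflTransGen.refl, by
          have := ceil_le_zero q hq3
          linarith⟩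
      · -- Chunk 3: route four pebbles of u_0 through u_1 to the root.
        have hp0 : 4 ≤ p (Sum.inr 0) := by omega
        obtain ⟨p3, hchain3, hval3, hrestr3⟩ := chunk3 p hp0
        have hsum : q - 4 = ∑ k, p3 (Sum.inr k) := by
          rw [hrestr3]
          have hs := sum_update_add (fun k => p (Sum.inr k)) 0 (p (Sum.inr 0) - 4)
          have hfj : p (Sum.inr 0) ≤ ∑ k, p (Sum.inr k) :=
            Finset.single_le_sum (f := fun k => p (Sum.inr k))
              (fun _ _ => Nat.zero_le _)
              (Finset.mem_univ (0 : Fin (2 ^ (n + 1) + 1)))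
          omega
        have hcard : (Finset.univ.filter fun k : Fin (2 ^ (n + 1) + 1) =>
            k ≠ 0 ∧ Odd (p3 (Sum.inr k))).card ≤ p3 (Sum.inr 0) / 2 := by
          have : (Finset.univ.filter fun k : Fin (2 ^ (n + 1) + 1) =>
              k ≠ 0 ∧ Odd (p3 (Sum.inr k))) = ∅ := by
            rw [Finset.filter_eq_empty_iff]
            intro k _
            rintro ⟨hk0, hodd⟩
            rw [congrFun hrestr3 k, Function.update_of_ne hk0, hzero k hk0] at hodd
            simp [Nat.odd_iff] at hodd
          rw [this]
          simp
        obtain ⟨p', hchain, hle⟩ := IH (q - 4) (by omega) p3 hsum hcard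
        refine ⟨p', hchain3.trans hchain, ?_⟩
        have hceil := ceil_chunk q 4 (by omega) (by norm_num) (by norm_num)
        rw [hval3] at hle
        push_cast at hle ⊢
        linarith

end Stmt18


theorem stmt18 (n : ℕ) (hn : 1 ≤ n)
    (p : (Fin (n + 1) ⊕ Fin (2 ^ (n + 1) + 1)) → ℕ)
    (q : ℕ) (hq : q = ∑ j : Fin (2 ^ (n + 1) + 1), p (Sum.inr j))
    (a : ℕ)
    (ha : a = (Finset.univ.filter
      fun j : Fin (2 ^ (n + 1) + 1) => j ≠ 0 ∧ Odd (p (Sum.inr j))).card)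
    (hab : a ≤ p (Sum.inr 0) / 2) :
    ∃ p', Relation.ReflTransGen
        (PebMoveFrom (lollipop n (2 ^ (n + 1))) {x | ∃ j, x = Sum.inr j}) p p' ∧
      (p (Sum.inl 0) : ℤ) + ⌈((q : ℚ) - 3) / 4⌉ ≤ (p' (Sum.inl 0) : ℤ) := by
  obtain ⟨p', hc, hle⟩ := Stmt18.main n q p hq (ha ▸ hab)
  exact ⟨p', hc, hle⟩
end
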